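/- The pair of sequences $\alpha_n, \beta_n$ with $\alpha_0 = 1$, $\alpha_n = q^{n^2}(q^{-n/2} + q^{n/2})$ for $n > 0$, and $\beta_n = 1/((q;q)_n (q^{1/2};q)_n)$, forms a Bailey pair relative to $a = 1$; that is, $\beta_n = \sum_{r=0}^{n} \alpha_r / ((q;q)_{n-r} (q;q)_{n+r})$ for all $n \ge 0$. -/

import Mathlib

open PowerSeries

/-- The q-Pochhammer symbol `(q^a; q^b)_m = ∏_{t<m} (1 - q^{a+bt})`. -/
noncomputable def poch (a b m : ℕ) : PowerSeries ℚ :=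
  ∏ t ∈ Finset.range m, (1 - (X : PowerSeries ℚ) ^ (a + b * t))

/-- `α_n` of Slater's Bailey pair F(1): `α_0 = 1`, `α_n = q^{n²}(q^{-n/2}+q^{n/2})` for `n > 0`,
written after the dilation `q ↦ q²` so that all powers are integral. -/
noncomputable def alphaF1 (n : ℕ) : PowerSeries ℚ :=
  if n = 0 then 1 else (X : PowerSeries ℚ) ^ (2*n^2 - n) + (X : PowerSeries ℚ) ^ (2*n^2 + n)


noncomputable def gb : ℕ → ℕ → PowerSeries ℚ
  | 0, 0 => 1
  | 0, _+1 => 0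
  | _+1, 0 => 1
  | m+1, k+1 => gb m (k+1) + (X : PowerSeries ℚ)^(2*(m-k)) * gb m k

def TT (d : ℤ) : ℕ := (d*(d+1)).toNat / 2

lemma TT_spec (d : ℤ) : (TT d : ℤ) * 2 = d * (d + 1) := by
  obtain ⟨k, hk⟩ := Int.even_mul_succ_self d
  have h : 0 ≤ d * (d + 1) := by nlinarith [sq_nonneg (2*d+1)]
  unfold TT
  generalize hd : d * (d + 1) = a at *
  omega

lemma gb_of_lt {m k : ℕ} (h : m < k) : gb m k = 0 := by
  induction m generalizing k with
  | zero => obtain ⟨j, rfl⟩ := Nat.exists_eq_add_of_lt h; simp [gb]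
  | succ m ih =>
      obtain ⟨j, rfl⟩ := Nat.exists_eq_add_of_lt h
      have h1 : m + 1 + j + 1 = (m + j + 1) + 1 := by omega
      rw [h1]
      show gb m (m+j+1+1) + _ * gb m (m+j+1) = 0
      rw [ih (by omega), ih (by omega)]
      simp

lemma gb_self (m : ℕ) : gb m m = 1 := by
  induction m with
  | zero => rfl
  | succ m ih =>
      show gb m (m+1) + (X : PowerSeries ℚ)^(2*(m-m)) * gb m m = 1
      rw [gb_of_lt (by omega), ih]
      simp

lemma gb_zero (m : ℕ) : gb m 0 = 1 := by
  cases m with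
  | zero => rfl
  | succ m => rfl

lemma poch_succ (a b m : ℕ) :
    poch a b (m+1) = poch a b m * (1 - (X : PowerSeries ℚ) ^ (a + b * m)) := by
  unfold poch; rw [Finset.prod_range_succ]

lemma gb_prod {m k : ℕ} (h : k ≤ m) :
    poch 2 2 k * poch 2 2 (m - k) * gb m k = poch 2 2 m := by
  induction m generalizing k with
  | zero =>
      interval_cases k
      simp [poch, gb_self]
  | succ m ih =>
      rcases Nat.eq_or_lt_of_le h with rfl | hlt
      · rw [gb_self, Nat.sub_self]
        simp [poch]
      · have hk : k ≤ m := by omega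
        cases k with
        | zero =>
            rw [gb_zero, Nat.sub_zero]
            simp [poch]
        | succ k =>
            have hk' : k ≤ m := by omega
            show poch 2 2 (k+1) * poch 2 2 (m + 1 - (k+1)) *
              (gb m (k+1) + (X : PowerSeries ℚ)^(2*(m-k)) * gb m k) = poch 2 2 (m+1)
            have e1 : m + 1 - (k+1) = (m - (k+1)) + 1 := by omega
            have A : poch 2 2 (k+1)
                = poch 2 2 k * (1 - (X : PowerSeries ℚ)^(2*(k+1))) := by
              have e : 2 + 2*k = 2*(k+1) := by omega
              rw [poch_succ, e]
            have B : poch 2 2 (m + 1 - (k+1))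
                = poch 2 2 (m-(k+1)) * (1 - (X : PowerSeries ℚ)^(2*(m-k))) := by
              have e : 2 + 2*(m-(k+1)) = 2*(m-k) := by omega
              rw [e1, poch_succ, e]
            have Cc : poch 2 2 (m+1)
                = poch 2 2 m * (1 - (X : PowerSeries ℚ)^(2*(m-k)) * (X : PowerSeries ℚ)^(2*(k+1))) := by
              have e : 2 + 2*m = 2*(m-k) + 2*(k+1) := by omega
              rw [poch_succ, e, pow_add]
            have h5 := ih hk
            have h6 := ih hk'
            rw [A] at h5
            have e4 : m - k = (m - (k+1)) + 1 := by omega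
            have B2 : poch 2 2 (m - k)
                = poch 2 2 (m-(k+1)) * (1 - (X : PowerSeries ℚ)^(2*(m-k))) := by
              have e : 2 + 2*(m-(k+1)) = 2*(m-k) := by omega
              nth_rewrite 1 [e4]
              rw [poch_succ, e]
            rw [B2] at h6
            rw [A, B, Cc]
            linear_combination (1 - (X : PowerSeries ℚ)^(2*(m-k))) * h5
              + (X : PowerSeries ℚ)^(2*(m-k)) * (1 - (X : PowerSeries ℚ)^(2*(k+1))) * h6

lemma poch_constantCoeff {a b m : ℕ} (ha : 1 ≤ a) :
    constantCoeff (poch a b m) = 1 := by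
  unfold poch
  rw [map_prod]
  apply Finset.prod_eq_one
  intro t _
  rw [map_sub, map_one, map_pow, constantCoeff_X]
  rw [zero_pow (by omega), sub_zero]

lemma poch_ne_zero {a b m : ℕ} (ha : 1 ≤ a) : poch a b m ≠ 0 := by
  intro h
  have := poch_constantCoeff (b := b) (m := m) ha
  rw [h, map_zero] at this
  simp at this

lemma gb_symm {m k : ℕ} (h : k ≤ m) : gb m k = gb m (m - k) := by
  have h1 := gb_prod h
  have h2 := gb_prod (Nat.sub_le m k)
  rw [Nat.sub_sub_self h] at h2
  have hne : poch 2 2 k * poch 2 2 (m - k) ≠ 0 :=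
    mul_ne_zero (poch_ne_zero (by omega)) (poch_ne_zero (by omega))
  apply mul_left_cancel₀ hne
  rw [h1, mul_comm (poch 2 2 k)]
  exact h2.symm

lemma TT_eq_of {d e : ℤ} (h : d*(d+1) = e*(e+1)) : TT d = TT e := by
  have h1 := TT_spec d
  have h2 := TT_spec e
  omega

noncomputable def SS (m : ℕ) : PowerSeries ℚ :=
  ∑ j ∈ Finset.range (m+1), (X : PowerSeries ℚ)^(TT (2*(j:ℤ) - m)) * gb m j

lemma L1 {j m : ℕ} (h : j ≤ m) :
    TT (2*((j:ℤ)+1) - ((m:ℤ)+1)) + 2*(m-j) = TT (2*(j:ℤ) - m) + (m+1) := by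
  have s1 := TT_spec (2*((j:ℤ)+1) - ((m:ℤ)+1))
  have s2 := TT_spec (2*(j:ℤ) - m)
  have hc : ((m - j : ℕ) : ℤ) = (m : ℤ) - j := by omega
  have key : (TT (2*((j:ℤ)+1) - ((m:ℤ)+1)) : ℤ) * 2
      = (TT (2*(j:ℤ) - m) : ℤ) * 2 + 2*(2*(j:ℤ) - m) + 2 := by
    linear_combination s1 - s2
  omega

lemma L2 {j m : ℕ} (h : j ≤ m) :
    TT (2*(j:ℤ) - ((m:ℤ)+1)) = TT (2*((m:ℤ)-j) - m) := by
  apply TT_eq_of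
  ring

lemma SS_succ (m : ℕ) :
    SS (m+1) = (1 + (X : PowerSeries ℚ)^(m+1)) * SS m := by
  have hgb : ∀ k : ℕ, gb (m+1) (k+1)
      = gb m (k+1) + (X : PowerSeries ℚ)^(2*(m-k)) * gb m k := fun k => rfl
  have step1 : SS (m+1)
      = (∑ i ∈ Finset.range (m+1),
          (X : PowerSeries ℚ)^(TT (2*((i:ℤ)+1) - ((m:ℤ)+1))) * gb m (i+1)
        + (X : PowerSeries ℚ)^(TT (0 - ((m:ℤ)+1))) * gb m 0)
        + ∑ i ∈ Finset.range (m+1),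
          (X : PowerSeries ℚ)^(TT (2*((i:ℤ)+1) - ((m:ℤ)+1)) + 2*(m-i)) * gb m i := by
    unfold SS
    rw [Finset.sum_range_succ']
    have : ∀ i ∈ Finset.range (m+1),
        (X : PowerSeries ℚ)^(TT (2*((i+1 : ℕ):ℤ) - ((m+1 : ℕ):ℤ))) * gb (m+1) (i+1)
        = (X : PowerSeries ℚ)^(TT (2*((i:ℤ)+1) - ((m:ℤ)+1))) * gb m (i+1)
          + (X : PowerSeries ℚ)^(TT (2*((i:ℤ)+1) - ((m:ℤ)+1)) + 2*(m-i)) * gb m i := by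
      intro i _
      rw [hgb i, mul_add, pow_add]
      push_cast
      ring
    rw [Finset.sum_congr rfl this, Finset.sum_add_distrib]
    have h0 : gb (m+1) 0 = gb m 0 := by rw [gb_zero, gb_zero]
    rw [h0]
    push_cast
    ring
  have step2 : ∑ i ∈ Finset.range (m+1),
      (X : PowerSeries ℚ)^(TT (2*((i:ℤ)+1) - ((m:ℤ)+1)) + 2*(m-i)) * gb m i
      = (X : PowerSeries ℚ)^(m+1) * SS m := by
    unfold SS
    rw [Finset.mul_sum]
    apply Finset.sum_congr rfl
    intro i hi
    rw [Finset.mem_range] at hi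
    rw [L1 (by omega), pow_add]
    ring
  have step3 : (∑ i ∈ Finset.range (m+1),
      (X : PowerSeries ℚ)^(TT (2*((i:ℤ)+1) - ((m:ℤ)+1))) * gb m (i+1)
      + (X : PowerSeries ℚ)^(TT (0 - ((m:ℤ)+1))) * gb m 0)
      = ∑ j ∈ Finset.range (m+2),
          (X : PowerSeries ℚ)^(TT (2*(j:ℤ) - ((m:ℤ)+1))) * gb m j := by
    conv_rhs => rw [Finset.sum_range_succ']
    push_cast
    ring_nf
    congr 1
    refine Finset.sum_congr rfl fun x _ => ?_
    rw [show (1:ℤ) + (x:ℤ)*2 - (m:ℤ) = 1 - (m:ℤ) + (x:ℤ)*2 by ring]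
  have step4 : ∑ j ∈ Finset.range (m+2),
      (X : PowerSeries ℚ)^(TT (2*(j:ℤ) - ((m:ℤ)+1))) * gb m j
      = ∑ j ∈ Finset.range (m+1),
          (X : PowerSeries ℚ)^(TT (2*(j:ℤ) - ((m:ℤ)+1))) * gb m j := by
    rw [Finset.sum_range_succ, gb_of_lt (by omega)]
    simp
  have step5 : ∑ j ∈ Finset.range (m+1),
      (X : PowerSeries ℚ)^(TT (2*(j:ℤ) - ((m:ℤ)+1))) * gb m j = SS m := by
    have e1 : ∀ j ∈ Finset.range (m+1),
        (X : PowerSeries ℚ)^(TT (2*(j:ℤ) - ((m:ℤ)+1))) * gb m j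
        = (X : PowerSeries ℚ)^(TT (2*(((m-j : ℕ)):ℤ) - m)) * gb m (m - j) := by
      intro j hj
      rw [Finset.mem_range] at hj
      have hj' : j ≤ m := by omega
      have hc : ((m - j : ℕ) : ℤ) = (m : ℤ) - j := by omega
      rw [L2 hj', gb_symm hj', hc]
    rw [Finset.sum_congr rfl e1]
    have := Finset.sum_range_reflect
      (fun j => (X : PowerSeries ℚ)^(TT (2*(j:ℤ) - m)) * gb m j) (m+1)
    simp only [Nat.add_sub_cancel] at this
    unfold SS
    exact this
  rw [step1, step2, step3, step4, step5]
  ring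

lemma TT_zero : TT 0 = 0 := rfl

lemma SS_eq (m : ℕ) : SS m = ∏ t ∈ Finset.range m, (1 + (X : PowerSeries ℚ)^(t+1)) := by
  induction m with
  | zero =>
      unfold SS
      simp [TT_zero, gb_self]
  | succ m ih =>
      rw [SS_succ, ih, Finset.prod_range_succ]
      ring

lemma TT_neg_two (r : ℕ) : TT (-(2*(r:ℤ))) = 2*r^2 - r := by
  have s := TT_spec (-(2*(r:ℤ)))
  have h : (TT (-(2*(r:ℤ))) : ℤ) * 2 = 4*((r:ℤ))^2 - 2*(r:ℤ) := by linear_combination s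
  have hr : r ≤ 2*r^2 := by nlinarith
  zify [hr]
  linarith [h]

lemma TT_two (r : ℕ) : TT (2*(r:ℤ)) = 2*r^2 + r := by
  have s := TT_spec (2*(r:ℤ))
  have h : (TT (2*(r:ℤ)) : ℤ) * 2 = 4*((r:ℤ))^2 + 2*(r:ℤ) := by linear_combination s
  zify
  linarith [h]

lemma sum_alpha (n : ℕ) :
    ∑ r ∈ Finset.range (n+1), alphaF1 r * gb (2*n) (n-r) = SS (2*n) := by
  have halpha : ∀ r : ℕ, alphaF1 r
      = (X : PowerSeries ℚ)^(2*r^2 - r)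
        + (if r = 0 then 0 else (X : PowerSeries ℚ)^(2*r^2 + r)) := by
    intro r
    cases r with
    | zero => simp [alphaF1]
    | succ r => simp [alphaF1]
  have hsplit : ∑ r ∈ Finset.range (n+1), alphaF1 r * gb (2*n) (n-r)
      = (∑ r ∈ Finset.range (n+1), (X : PowerSeries ℚ)^(2*r^2 - r) * gb (2*n) (n-r))
        + ∑ r ∈ Finset.range (n+1),
            (if r = 0 then 0 else (X : PowerSeries ℚ)^(2*r^2 + r) * gb (2*n) (n-r)) := by
    rw [← Finset.sum_add_distrib]
    apply Finset.sum_congr rfl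
    intro r _
    rw [halpha r, add_mul, ite_mul, zero_mul]
  have hA : ∑ r ∈ Finset.range (n+1), (X : PowerSeries ℚ)^(2*r^2 - r) * gb (2*n) (n-r)
      = ∑ j ∈ Finset.range (n+1), (X : PowerSeries ℚ)^(TT (2*(j:ℤ) - ((2*n : ℕ):ℤ))) * gb (2*n) j := by
    rw [← Finset.sum_range_reflect
      (fun j => (X : PowerSeries ℚ)^(TT (2*(j:ℤ) - ((2*n : ℕ):ℤ))) * gb (2*n) j) (n+1)]
    apply Finset.sum_congr rfl
    intro r hr
    rw [Finset.mem_range] at hr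
    simp only [Nat.add_sub_cancel]
    have hc : ((n - r : ℕ) : ℤ) = (n : ℤ) - r := by omega
    have harg : 2*(((n - r : ℕ)):ℤ) - ((2*n : ℕ):ℤ) = -(2*(r:ℤ)) := by
      rw [hc]; push_cast; ring
    rw [harg, TT_neg_two]
  have hB : ∑ r ∈ Finset.range (n+1),
        (if r = 0 then 0 else (X : PowerSeries ℚ)^(2*r^2 + r) * gb (2*n) (n-r))
      = ∑ i ∈ Finset.range n,
          (X : PowerSeries ℚ)^(TT (2*((n+1+i : ℕ):ℤ) - ((2*n : ℕ):ℤ))) * gb (2*n) (n+1+i) := by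
    rw [Finset.sum_range_succ']
    rw [if_pos rfl, add_zero]
    apply Finset.sum_congr rfl
    intro i hi
    rw [Finset.mem_range] at hi
    rw [if_neg (Nat.succ_ne_zero i)]
    have harg : 2*(((n+1+i : ℕ)):ℤ) - ((2*n : ℕ):ℤ) = 2*((i+1 : ℕ):ℤ) := by
      push_cast; ring
    rw [harg, TT_two]
    have hsym : gb (2*n) (n+1+i) = gb (2*n) (n - (i+1)) := by
      have e : 2*n - (n+1+i) = n - (i+1) := by omega
      rw [gb_symm (by omega : n+1+i ≤ 2*n), e]
    rw [hsym]
  rw [hsplit, hA, hB]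
  unfold SS
  have h21 : 2*n + 1 = (n+1) + n := by omega
  conv_rhs => rw [h21, Finset.sum_range_add]

lemma poch11_split (n : ℕ) : poch 1 1 (2*n) = poch 2 2 n * poch 1 2 n := by
  induction n with
  | zero => simp [poch]
  | succ n ih =>
      have h2 : 2*(n+1) = (2*n + 1) + 1 := by ring
      rw [h2, poch_succ, poch_succ, ih, poch_succ 2 2 n, poch_succ 1 2 n]
      have e1 : 1 + 1*(2*n) = 1 + 2*n := by ring
      have e2 : 1 + 1*(2*n+1) = 2 + 2*n := by ring
      rw [e1, e2]
      ring

lemma poch22_double (m : ℕ) :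
    poch 2 2 m = poch 1 1 m * ∏ t ∈ Finset.range m, (1 + (X : PowerSeries ℚ)^(t+1)) := by
  unfold poch
  rw [← Finset.prod_mul_distrib]
  apply Finset.prod_congr rfl
  intro t _
  have e : 2 + 2*t = (1+1*t) + (1+1*t) := by ring
  have e2 : t + 1 = 1 + 1*t := by ring
  rw [e, e2, pow_add]
  ring

lemma inv_eq_aux {b c d : PowerSeries ℚ} (hb : constantCoeff b ≠ 0)
    (hd : constantCoeff d ≠ 0) (h : b * c = d) : b⁻¹ = c * d⁻¹ := by
  rw [PowerSeries.inv_eq_iff_mul_eq_one hb]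
  have : c * d⁻¹ * b = (b * c) * d⁻¹ := by ring
  rw [this, h, PowerSeries.mul_inv_cancel _ hd]

/-- Slater's Bailey pair F(1) relative to `a = 1` (after the dilation `q ↦ q²`):
`β_n = 1/((q;q)_n (q^{1/2};q)_n)` satisfies `β_n = ∑_{r≤n} α_r/((q;q)_{n-r}(q;q)_{n+r})`. -/
theorem slater_F1_bailey_pair (n : ℕ) :
    (poch 2 2 n * poch 1 2 n)⁻¹
      = ∑ r ∈ Finset.range (n+1), alphaF1 r * (poch 2 2 (n - r) * poch 2 2 (n + r))⁻¹ := by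
  have cD : constantCoeff (poch 2 2 (2*n)) ≠ 0 := by
    rw [poch_constantCoeff (by norm_num)]; norm_num
  have cA : constantCoeff (poch 2 2 n * poch 1 2 n) ≠ 0 := by
    rw [map_mul, poch_constantCoeff (by norm_num), poch_constantCoeff (by norm_num)]
    norm_num
  have key1 : (poch 2 2 n * poch 1 2 n)
      * ∏ t ∈ Finset.range (2*n), (1 + (X : PowerSeries ℚ)^(t+1)) = poch 2 2 (2*n) := by
    rw [← poch11_split, ← poch22_double]
  have hLHS : (poch 2 2 n * poch 1 2 n)⁻¹
      = (∏ t ∈ Finset.range (2*n), (1 + (X : PowerSeries ℚ)^(t+1)))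
        * (poch 2 2 (2*n))⁻¹ :=
    inv_eq_aux cA cD key1
  have hterm : ∀ r ∈ Finset.range (n+1),
      alphaF1 r * (poch 2 2 (n - r) * poch 2 2 (n + r))⁻¹
      = alphaF1 r * gb (2*n) (n - r) * (poch 2 2 (2*n))⁻¹ := by
    intro r hr
    rw [Finset.mem_range] at hr
    have cB : constantCoeff (poch 2 2 (n-r) * poch 2 2 (n+r)) ≠ 0 := by
      rw [map_mul, poch_constantCoeff (by norm_num), poch_constantCoeff (by norm_num)]
      norm_num
    have key2 : (poch 2 2 (n-r) * poch 2 2 (n+r)) * gb (2*n) (n-r) = poch 2 2 (2*n) := by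
      have h1 := gb_prod (show n - r ≤ 2*n by omega)
      have e : 2*n - (n-r) = n + r := by omega
      rw [e] at h1
      exact h1
    rw [inv_eq_aux cB cD key2, ← mul_assoc]
  rw [hLHS, Finset.sum_congr rfl hterm, ← Finset.sum_mul, sum_alpha, SS_eq]
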